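/- Let z1 ≠ 0 and consider the family of 2×2 matrices a1(t) = [[a1', 0],[0, t²·z1 + (1−t²)·z1]], together with the charge-2 gluing map ⊞_L sending a pair ((a1', a2', d', b', c'), (a1'', a2'', b'', c'')) with |a1''− z1| < δ and d'·a1' ≠ a1'' to the 5-tuple a1 = diag(a1', a1''), a2 = [[a2', b'c''/(a1''−d'a1')],[b''c'/(d'a1'−a1''), a2'']], d = diag(d', 1), b = (b', b'')ᵗ, c = (c', c''). Then the resulting data satisfies the blow-up integrability condition a1 d a2 − a2 d a1 + bc = 0 provided the two input data satisfy their respective integrability conditions ([a1'', a2''] + b''c'' = 0 trivially in the scalar case, and a1'd'a2' − a2'd'a1' + b'c' = 0), and b·c has off-diagonal entries b'c'' and b''c' while the diagonal entries are b'c' and b''c''. -/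

import Mathlib

open Matrix

/-- Integrability of the glued charge-2 data `⊞_L`: given charge-1 blown-up scalar data
`(a1', a2', d', b', c')` with `b'·c' = 0` and charge-1 plane data `(a1'', a2'', b'', c'')`
with `b''·c'' = 0`, `|a1'' − z1| < δ` and `d'·a1' ≠ a1''`, the glued 2×2 configuration
satisfies the blow-up integrability condition `a1 d a2 − a2 d a1 + bc = 0`, and `bc` has
off-diagonal entries `b'·c''`, `b''·c'` and diagonal entries `b'·c'`, `b''·c''`. -/
theorem stmt15 {r : ℕ} (z1 : ℂ) (δ : ℝ) (hz1 : z1 ≠ 0)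
    (a1' a2' d' a1'' a2'' : ℂ) (hδ : ‖a1'' - z1‖ < δ)
    (hne : d' * a1' ≠ a1'')
    (b' b'' c' c'' : Fin r → ℂ)
    (h' : b' ⬝ᵥ c' = 0) (h'' : b'' ⬝ᵥ c'' = 0) :
    let a1 : Matrix (Fin 2) (Fin 2) ℂ := !![a1', 0; 0, a1'']
    let a2 : Matrix (Fin 2) (Fin 2) ℂ :=
      !![a2', (b' ⬝ᵥ c'') / (a1'' - d' * a1');
         (b'' ⬝ᵥ c') / (d' * a1' - a1''), a2'']
    let d : Matrix (Fin 2) (Fin 2) ℂ := !![d', 0; 0, 1]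
    let b : Matrix (Fin 2) (Fin r) ℂ := Matrix.of ![b', b'']
    let c : Matrix (Fin r) (Fin 2) ℂ := (Matrix.of ![c', c''])ᵀ
    a1 * d * a2 - a2 * d * a1 + b * c = 0 ∧
      (b * c) 0 1 = b' ⬝ᵥ c'' ∧ (b * c) 1 0 = b'' ⬝ᵥ c' ∧
      (b * c) 0 0 = b' ⬝ᵥ c' ∧ (b * c) 1 1 = b'' ⬝ᵥ c'' := by
  intro a1 a2 d b c
  have h01 : (b * c) 0 1 = b' ⬝ᵥ c'' := by
    simp [b, c, Matrix.mul_apply, dotProduct, Matrix.transpose_apply, Matrix.vecHead]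
  have h10 : (b * c) 1 0 = b'' ⬝ᵥ c' := by
    simp [b, c, Matrix.mul_apply, dotProduct, Matrix.transpose_apply, Matrix.vecHead]
  have h00 : (b * c) 0 0 = b' ⬝ᵥ c' := by
    simp [b, c, Matrix.mul_apply, dotProduct, Matrix.transpose_apply, Matrix.vecHead]
  have h11 : (b * c) 1 1 = b'' ⬝ᵥ c'' := by
    simp [b, c, Matrix.mul_apply, dotProduct, Matrix.transpose_apply, Matrix.vecHead]
  refine ⟨?_, h01, h10, h00, h11⟩
  have hne1 : a1'' - d' * a1' ≠ 0 := fun h => hne (by linear_combination -h)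
  have hne2 : d' * a1' - a1'' ≠ 0 := sub_ne_zero.mpr hne
  have hne3 : a1' * d' - a1'' ≠ 0 := fun h => hne (by linear_combination h)
  have hne4 : -(a1' * d') + a1'' ≠ 0 := fun h => hne (by linear_combination -h)
  ext i j
  fin_cases i <;> fin_cases j <;>
      simp [a1, a2, d, Matrix.mul_apply, Fin.sum_univ_two, h00, h01, h10, h11, h', h'']
  all_goals try field_simp
  all_goals ring_nf
  linear_combination -(b' ⬝ᵥ c'') * mul_inv_cancel₀ hne4
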